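/- arXiv:1008.2149 — 4 statements merged into one kernel-verified Lean document; each statement's English description precedes it below -/
import Mathlib

section
/- Let n ≥ 3 and d ≥ 1 be integers, and write (1 + z + ... + z^d)^(2n) = a_0 + a_1 z + ... + a_{2nd} z^{2nd}. Then a_{nd} - a_{nd-1} ≤ a_{nd-d-1} - a_{nd-d-2}. -/
open Finset Polynomial

/-- Coefficient of `z^k` in `(1 + z + ⋯ + z^d)^m`, extended by 0 to all integers `k`. -/
def aa (d : ℕ) : ℕ → ℤ → ℤ
  | 0, k => if k = 0 then 1 else 0
  | m+1, k => ∑ j ∈ Finset.range (d+1), aa d m (k - j)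

lemma aa_zero (d : ℕ) (k : ℤ) : aa d 0 k = if k = 0 then 1 else 0 := rfl

lemma aa_succ (d m : ℕ) (k : ℤ) :
    aa d (m+1) k = ∑ j ∈ Finset.range (d+1), aa d m (k - j) := rfl

lemma aa_neg (d m : ℕ) (k : ℤ) (hk : k < 0) : aa d m k = 0 := by
  induction m generalizing k with
  | zero => rw [aa_zero]; simp; omega
  | succ m ih =>
    rw [aa_succ]
    exact Finset.sum_eq_zero fun j _ => ih _ (by omega)

lemma aa_nonneg (d m : ℕ) (k : ℤ) : 0 ≤ aa d m k := by
  induction m generalizing k with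
  | zero => rw [aa_zero]; split <;> norm_num
  | succ m ih => rw [aa_succ]; exact Finset.sum_nonneg fun j _ => ih _

lemma aa_gt (d m : ℕ) (k : ℤ) (hk : (m : ℤ) * d < k) : aa d m k = 0 := by
  induction m generalizing k with
  | zero => simp at hk; rw [aa_zero]; simp; omega
  | succ m ih =>
    rw [aa_succ]
    refine Finset.sum_eq_zero fun j hj => ih _ ?_
    simp at hj
    have h1 : ((m : ℤ) + 1) * d = (m : ℤ) * d + d := by ring
    push_cast at hk
    omega

lemma aa_at_zero (d m : ℕ) : aa d m 0 = 1 := by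
  induction m with
  | zero => simp [aa_zero]
  | succ m ih =>
    rw [aa_succ]
    rw [Finset.sum_eq_single 0]
    · simpa using ih
    · intro j hj hj0
      refine aa_neg _ _ _ ?_
      have : 0 < j := Nat.pos_of_ne_zero hj0
      omega
    · simp

lemma aa_symm (d m : ℕ) (k : ℤ) : aa d m ((m : ℤ) * d - k) = aa d m k := by
  induction m generalizing k with
  | zero => simp [aa_zero]
  | succ m ih =>
    rw [aa_succ, aa_succ]
    rw [← Finset.sum_range_reflect]
    refine Finset.sum_congr rfl fun j hj => ?_
    simp only [Finset.mem_range] at hj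
    have hdj : ((d + 1 - 1 - j : ℕ) : ℤ) = (d : ℤ) - j := by omega
    rw [show (↑(m+1):ℤ) * d - k - ((d + 1 - 1 - j : ℕ) : ℤ) = (m : ℤ) * d - (k - j) by
      rw [hdj]; push_cast; ring]
    exact ih _
/-- First difference identity: going up one exponent. -/
lemma aa_diff (d m : ℕ) (k : ℤ) :
    aa d (m+1) k - aa d (m+1) (k-1) = aa d m k - aa d m (k - d - 1) := by
  rw [aa_succ, aa_succ, ← Finset.sum_sub_distrib]
  have h : ∀ j ∈ Finset.range (d+1),
      aa d m (k - j) - aa d m (k - 1 - j)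
        = (fun t : ℕ => aa d m (k - t)) j - (fun t : ℕ => aa d m (k - t)) (j+1) := by
    intro j _
    simp only
    rw [show k - 1 - (j:ℤ) = k - ((j:ℤ)+1) by ring]
    push_cast
    ring_nf
  rw [Finset.sum_congr rfl h, Finset.sum_range_sub']
  simp only [Nat.cast_zero, sub_zero, Nat.cast_add, Nat.cast_one]
  rw [show k - ((d:ℤ) + 1) = k - d - 1 by ring]

/-- Telescoping a gap of `d+1` into first differences. -/
lemma aa_telescope (d m : ℕ) (k : ℤ) :
    aa d m k - aa d m (k - d - 1)
      = ∑ t ∈ Finset.range (d+1), (aa d m (k - t) - aa d m (k - t - 1)) := by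
  have h : ∀ t ∈ Finset.range (d+1),
      aa d m (k - t) - aa d m (k - t - 1)
        = (fun s : ℕ => aa d m (k - s)) t - (fun s : ℕ => aa d m (k - s)) (t+1) := by
    intro t _
    simp only
    rw [show k - (t:ℤ) - 1 = k - ((t:ℤ)+1) by ring]
    push_cast
    ring_nf
  rw [Finset.sum_congr rfl h, Finset.sum_range_sub']
  simp only [Nat.cast_zero, sub_zero, Nat.cast_add, Nat.cast_one]
  rw [show k - ((d:ℤ) + 1) = k - d - 1 by ring]

lemma aa_mono_of_step (d m : ℕ)
    (hstep : ∀ k : ℤ, 2 * (k + 1) ≤ (m : ℤ) * d → aa d m k ≤ aa d m (k+1)) :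
    ∀ i j : ℤ, i ≤ j → 2 * j ≤ (m : ℤ) * d → aa d m i ≤ aa d m j := by
  intro i j hij hj
  obtain ⟨t, rfl⟩ : ∃ t : ℕ, j = i + t := ⟨(j - i).toNat, by omega⟩
  clear hij
  induction t with
  | zero => simp
  | succ t ih =>
    have h1 : i + ((t : ℤ) + 1) = (i + t) + 1 := by ring
    push_cast at hj ⊢
    rw [h1]
    refine le_trans (ih (by omega)) (hstep _ (by omega))

lemma aa_step (d m : ℕ) : ∀ k : ℤ, 2 * (k + 1) ≤ (m : ℤ) * d → aa d m k ≤ aa d m (k+1) := by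
  induction m with
  | zero =>
    intro k hk
    simp at hk
    rw [aa_neg d 0 k (by omega)]
    exact aa_nonneg _ _ _
  | succ m ih =>
    intro k hk
    push_cast at hk
    have hexp : ((m:ℤ) + 1) * d = (m:ℤ) * d + d := by ring
    have key : aa d m (k - d) ≤ aa d m (k + 1) := by
      rcases le_or_gt (2 * (k+1)) ((m : ℤ) * d) with h | h
      · exact aa_mono_of_step d m ih _ _ (by omega) h
      · have hsymm : aa d m (k+1) = aa d m ((m : ℤ) * d - (k+1)) := (aa_symm d m (k+1)).symm
        rw [hsymm]
        exact aa_mono_of_step d m ih _ _ (by omega) (by omega)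
    have hdiff := aa_diff d m (k+1)
    have h2 : k + 1 - 1 = k := by ring
    have h3 : k + 1 - (d : ℤ) - 1 = k - d := by ring
    rw [h2, h3] at hdiff
    linarith

lemma aa_mono (d m : ℕ) (i j : ℤ) (hij : i ≤ j) (hj : 2 * j ≤ (m : ℤ) * d) :
    aa d m i ≤ aa d m j :=
  aa_mono_of_step d m (aa_step d m) i j hij hj
lemma aa_coeff (d : ℕ) : ∀ (m : ℕ) (t : ℕ),
    (((∑ i ∈ Finset.range (d+1), (Polynomial.X : Polynomial ℤ)^i))^m).coeff t = aa d m t := by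
  intro m
  induction m with
  | zero =>
    intro t
    rw [pow_zero, Polynomial.coeff_one, aa_zero]
    simp
  | succ m ih =>
    intro t
    rw [pow_succ, Finset.mul_sum, Polynomial.finset_sum_coeff, aa_succ]
    refine Finset.sum_congr rfl fun j hj => ?_
    rw [Polynomial.coeff_mul_X_pow']
    rcases le_or_gt j t with h | h
    · rw [if_pos h, ih]
      congr 1
      omega
    · rw [if_neg (by omega)]
      rw [aa_neg]
      omega

lemma cast_pascal (a b : ℕ) : (((a+1).choose (b+1) : ℕ) : ℤ) = a.choose b + a.choose (b+1) := by
  rw [Nat.choose_succ_succ]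
  push_cast
  ring

lemma cast_c1 (n : ℕ) : ((n.choose 1 : ℕ) : ℤ) = n := by rw [Nat.choose_one_right]

lemma cast_c2 (n : ℕ) : 2 * ((n.choose 2 : ℕ) : ℤ) = n * (n - 1) := by
  induction n with
  | zero => simp
  | succ n ih => rw [cast_pascal]; push_cast; linear_combination ih + 2 * cast_c1 n

lemma cast_c3 (n : ℕ) : 6 * ((n.choose 3 : ℕ) : ℤ) = n * (n - 1) * (n - 2) := by
  induction n with
  | zero => simp
  | succ n ih => rw [cast_pascal]; push_cast; linear_combination ih + 3 * cast_c2 n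

lemma cast_c4 (n : ℕ) : 24 * ((n.choose 4 : ℕ) : ℤ) = n * (n - 1) * (n - 2) * (n - 3) := by
  induction n with
  | zero => simp
  | succ n ih => rw [cast_pascal]; push_cast; linear_combination ih + 4 * cast_c3 n
/-- Rearranged difference identity. -/
lemma aa_rec (d m : ℕ) (k : ℤ) :
    aa d (m+1) k = aa d (m+1) (k-1) + aa d m k - aa d m (k - d - 1) := by
  have := aa_diff d m k
  linarith

lemma low1 (d : ℕ) : ∀ k : ℕ, k ≤ d → aa d 1 (k:ℤ) = 1 := by
  intro k
  induction k with
  | zero => intro _; exact_mod_cast aa_at_zero d 1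
  | succ k ih =>
    intro hk
    have h : aa d 1 ((k:ℤ)+1) = aa d 1 ((k:ℤ)+1-1) + aa d 0 ((k:ℤ)+1)
        - aa d 0 ((k:ℤ)+1-↑d-1) := aa_rec d 0 _
    rw [show (k:ℤ)+1-1 = (k:ℤ) by ring] at h
    rw [aa_neg d 0 ((k:ℤ)+1-↑d-1) (by omega)] at h
    have h0 : aa d 0 ((k:ℤ)+1) = 0 := by rw [aa_zero, if_neg (by omega)]
    rw [h0, ih (by omega)] at h
    push_cast
    linarith

lemma low2 (d : ℕ) : ∀ k : ℕ, k ≤ d → aa d 2 (k:ℤ) = (((k+1).choose 1 : ℕ) : ℤ) := by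
  intro k
  induction k with
  | zero => intro _; rw [show ((0:ℕ):ℤ) = (0:ℤ) by norm_num, aa_at_zero]; simp
  | succ k ih =>
    intro hk
    have h : aa d 2 ((k:ℤ)+1) = aa d 2 ((k:ℤ)+1-1) + aa d 1 ((k:ℤ)+1)
        - aa d 1 ((k:ℤ)+1-↑d-1) := aa_rec d 1 _
    rw [show (k:ℤ)+1-1 = (k:ℤ) by ring] at h
    rw [aa_neg d 1 ((k:ℤ)+1-↑d-1) (by omega)] at h
    have hl := low1 d (k+1) (by omega)
    push_cast at hl
    rw [hl, ih (by omega)] at h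
    have a1 := cast_c1 (k+1+1)
    have a2 := cast_c1 (k+1)
    push_cast at a1 a2 h ⊢
    linarith

lemma low3 (d : ℕ) : ∀ k : ℕ, k ≤ d → aa d 3 (k:ℤ) = (((k+2).choose 2 : ℕ) : ℤ) := by
  intro k
  induction k with
  | zero => intro _; rw [show ((0:ℕ):ℤ) = (0:ℤ) by norm_num, aa_at_zero]; simp
  | succ k ih =>
    intro hk
    have h : aa d 3 ((k:ℤ)+1) = aa d 3 ((k:ℤ)+1-1) + aa d 2 ((k:ℤ)+1)
        - aa d 2 ((k:ℤ)+1-↑d-1) := aa_rec d 2 _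
    rw [show (k:ℤ)+1-1 = (k:ℤ) by ring] at h
    rw [aa_neg d 2 ((k:ℤ)+1-↑d-1) (by omega)] at h
    have hl := low2 d (k+1) (by omega)
    push_cast at hl
    rw [hl, ih (by omega)] at h
    have a1 := cast_c2 (k+1+2)
    have a2 := cast_c2 (k+2)
    have a3 := cast_c1 (k+1+1)
    push_cast at a1 a2 a3 h ⊢
    linarith

lemma low4 (d : ℕ) : ∀ k : ℕ, k ≤ d → aa d 4 (k:ℤ) = (((k+3).choose 3 : ℕ) : ℤ) := by
  intro k
  induction k with
  | zero => intro _; rw [show ((0:ℕ):ℤ) = (0:ℤ) by norm_num, aa_at_zero]; simp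
  | succ k ih =>
    intro hk
    have h : aa d 4 ((k:ℤ)+1) = aa d 4 ((k:ℤ)+1-1) + aa d 3 ((k:ℤ)+1)
        - aa d 3 ((k:ℤ)+1-↑d-1) := aa_rec d 3 _
    rw [show (k:ℤ)+1-1 = (k:ℤ) by ring] at h
    rw [aa_neg d 3 ((k:ℤ)+1-↑d-1) (by omega)] at h
    have hl := low3 d (k+1) (by omega)
    push_cast at hl
    rw [hl, ih (by omega)] at h
    have a1 := cast_c3 (k+1+3)
    have a2 := cast_c3 (k+3)
    have a3 := cast_c2 (k+1+2)
    push_cast at a1 a2 a3 h ⊢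
    linarith

lemma low5 (d : ℕ) : ∀ k : ℕ, k ≤ d → aa d 5 (k:ℤ) = (((k+4).choose 4 : ℕ) : ℤ) := by
  intro k
  induction k with
  | zero => intro _; rw [show ((0:ℕ):ℤ) = (0:ℤ) by norm_num, aa_at_zero]; simp
  | succ k ih =>
    intro hk
    have h : aa d 5 ((k:ℤ)+1) = aa d 5 ((k:ℤ)+1-1) + aa d 4 ((k:ℤ)+1)
        - aa d 4 ((k:ℤ)+1-↑d-1) := aa_rec d 4 _
    rw [show (k:ℤ)+1-1 = (k:ℤ) by ring] at h
    rw [aa_neg d 4 ((k:ℤ)+1-↑d-1) (by omega)] at h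
    have hl := low4 d (k+1) (by omega)
    push_cast at hl
    rw [hl, ih (by omega)] at h
    have a1 := cast_c4 (k+1+4)
    have a2 := cast_c4 (k+4)
    have a3 := cast_c3 (k+1+3)
    push_cast at a1 a2 a3 h ⊢
    linarith
lemma mid2 (d : ℕ) : ∀ t : ℕ, t ≤ d →
    aa d 2 ((d:ℤ)+1+t) = (((d+t+2).choose 1 : ℕ) : ℤ) - 2 * (((t+1).choose 1 : ℕ) : ℤ) := by
  intro t
  induction t with
  | zero =>
    intro _
    have h : aa d 2 ((d:ℤ)+1) = aa d 2 ((d:ℤ)+1-1) + aa d 1 ((d:ℤ)+1)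
        - aa d 1 ((d:ℤ)+1-↑d-1) := aa_rec d 1 _
    rw [show (d:ℤ)+1-1 = (d:ℤ) by ring, show (d:ℤ)+1-↑d-1 = 0 by ring, aa_at_zero] at h
    rw [aa_gt d 1 ((d:ℤ)+1) (by push_cast; omega)] at h
    rw [low2 d d le_rfl] at h
    have a1 := cast_c1 (d+0+2)
    have a2 := cast_c1 (0+1)
    have a3 := cast_c1 (d+1)
    push_cast at a1 a2 a3 h ⊢
    simp only [add_zero]
    linarith
  | succ t ih =>
    intro ht
    have h : aa d 2 (((d:ℤ)+1+t)+1) = aa d 2 (((d:ℤ)+1+t)+1-1) + aa d 1 (((d:ℤ)+1+t)+1)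
        - aa d 1 (((d:ℤ)+1+t)+1-↑d-1) := aa_rec d 1 _
    rw [show ((d:ℤ)+1+t)+1-1 = (d:ℤ)+1+t by ring,
        show ((d:ℤ)+1+t)+1-↑d-1 = (t:ℤ)+1 by ring] at h
    rw [aa_gt d 1 (((d:ℤ)+1+t)+1) (by push_cast; omega)] at h
    have hl := low1 d (t+1) (by omega)
    push_cast at hl
    rw [hl, ih (by omega)] at h
    have a1 := cast_c1 (d+(t+1)+2)
    have a2 := cast_c1 ((t+1)+1)
    have a3 := cast_c1 (d+t+2)
    have a4 := cast_c1 (t+1)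
    push_cast at a1 a2 a3 a4 h ⊢
    rw [show (d:ℤ)+1+((t:ℤ)+1) = ((d:ℤ)+1+t)+1 by ring]
    linarith

lemma mid3 (d : ℕ) : ∀ t : ℕ, t ≤ d →
    aa d 3 ((d:ℤ)+1+t) = (((d+t+3).choose 2 : ℕ) : ℤ) - 3 * (((t+2).choose 2 : ℕ) : ℤ) := by
  intro t
  induction t with
  | zero =>
    intro _
    have h : aa d 3 ((d:ℤ)+1) = aa d 3 ((d:ℤ)+1-1) + aa d 2 ((d:ℤ)+1)
        - aa d 2 ((d:ℤ)+1-↑d-1) := aa_rec d 2 _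
    rw [show (d:ℤ)+1-1 = (d:ℤ) by ring, show (d:ℤ)+1-↑d-1 = 0 by ring, aa_at_zero] at h
    have hm := mid2 d 0 (by omega)
    push_cast at hm
    simp only [add_zero] at hm
    rw [hm, low3 d d le_rfl] at h
    have a1 := cast_c2 (d+0+3)
    have a2 := cast_c2 (0+2)
    have a3 := cast_c2 (d+2)
    have a4 := cast_c1 (d+0+2)
    have a5 := cast_c1 (0+1)
    push_cast at a1 a2 a3 a4 a5 h ⊢
    simp only [add_zero]
    linarith
  | succ t ih =>
    intro ht
    have h : aa d 3 (((d:ℤ)+1+t)+1) = aa d 3 (((d:ℤ)+1+t)+1-1) + aa d 2 (((d:ℤ)+1+t)+1)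
        - aa d 2 (((d:ℤ)+1+t)+1-↑d-1) := aa_rec d 2 _
    rw [show ((d:ℤ)+1+t)+1-1 = (d:ℤ)+1+t by ring,
        show ((d:ℤ)+1+t)+1-↑d-1 = ((t:ℤ)+1) by ring] at h
    have hm := mid2 d (t+1) (by omega)
    push_cast at hm
    rw [show (d:ℤ)+1+((t:ℤ)+1) = ((d:ℤ)+1+t)+1 by ring] at hm
    have hl := low2 d (t+1) (by omega)
    push_cast at hl
    rw [hm, hl, ih (by omega)] at h
    have a1 := cast_c2 (d+(t+1)+3)
    have a2 := cast_c2 ((t+1)+2)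
    have a3 := cast_c2 (d+t+3)
    have a4 := cast_c2 (t+2)
    have a5 := cast_c1 (d+(t+1)+2)
    have a6 := cast_c1 ((t+1)+1)
    have a7 := cast_c1 (t+1+1)
    push_cast at a1 a2 a3 a4 a5 a6 a7 h ⊢
    rw [show (d:ℤ)+1+((t:ℤ)+1) = ((d:ℤ)+1+t)+1 by ring]
    linarith

lemma mid4 (d : ℕ) : ∀ t : ℕ, t ≤ d →
    aa d 4 ((d:ℤ)+1+t) = (((d+t+4).choose 3 : ℕ) : ℤ) - 4 * (((t+3).choose 3 : ℕ) : ℤ) := by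
  intro t
  induction t with
  | zero =>
    intro _
    have h : aa d 4 ((d:ℤ)+1) = aa d 4 ((d:ℤ)+1-1) + aa d 3 ((d:ℤ)+1)
        - aa d 3 ((d:ℤ)+1-↑d-1) := aa_rec d 3 _
    rw [show (d:ℤ)+1-1 = (d:ℤ) by ring, show (d:ℤ)+1-↑d-1 = 0 by ring, aa_at_zero] at h
    have hm := mid3 d 0 (by omega)
    push_cast at hm
    simp only [add_zero] at hm
    rw [hm, low4 d d le_rfl] at h
    have a1 := cast_c3 (d+0+4)
    have a2 := cast_c3 (0+3)
    have a3 := cast_c3 (d+3)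
    have a4 := cast_c2 (d+0+3)
    have a5 := cast_c2 (0+2)
    push_cast at a1 a2 a3 a4 a5 h ⊢
    simp only [add_zero]
    linarith
  | succ t ih =>
    intro ht
    have h : aa d 4 (((d:ℤ)+1+t)+1) = aa d 4 (((d:ℤ)+1+t)+1-1) + aa d 3 (((d:ℤ)+1+t)+1)
        - aa d 3 (((d:ℤ)+1+t)+1-↑d-1) := aa_rec d 3 _
    rw [show ((d:ℤ)+1+t)+1-1 = (d:ℤ)+1+t by ring,
        show ((d:ℤ)+1+t)+1-↑d-1 = ((t:ℤ)+1) by ring] at h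
    have hm := mid3 d (t+1) (by omega)
    push_cast at hm
    rw [show (d:ℤ)+1+((t:ℤ)+1) = ((d:ℤ)+1+t)+1 by ring] at hm
    have hl := low3 d (t+1) (by omega)
    push_cast at hl
    rw [hm, hl, ih (by omega)] at h
    have a1 := cast_c3 (d+(t+1)+4)
    have a2 := cast_c3 ((t+1)+3)
    have a3 := cast_c3 (d+t+4)
    have a4 := cast_c3 (t+3)
    have a5 := cast_c2 (d+(t+1)+3)
    have a6 := cast_c2 ((t+1)+2)
    have a7 := cast_c2 (t+1+2)
    push_cast at a1 a2 a3 a4 a5 a6 a7 h ⊢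
    rw [show (d:ℤ)+1+((t:ℤ)+1) = ((d:ℤ)+1+t)+1 by ring]
    linarith

lemma mid5 (d : ℕ) : ∀ t : ℕ, t ≤ d →
    aa d 5 ((d:ℤ)+1+t) = (((d+t+5).choose 4 : ℕ) : ℤ) - 5 * (((t+4).choose 4 : ℕ) : ℤ) := by
  intro t
  induction t with
  | zero =>
    intro _
    have h : aa d 5 ((d:ℤ)+1) = aa d 5 ((d:ℤ)+1-1) + aa d 4 ((d:ℤ)+1)
        - aa d 4 ((d:ℤ)+1-↑d-1) := aa_rec d 4 _
    rw [show (d:ℤ)+1-1 = (d:ℤ) by ring, show (d:ℤ)+1-↑d-1 = 0 by ring, aa_at_zero] at h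
    have hm := mid4 d 0 (by omega)
    push_cast at hm
    simp only [add_zero] at hm
    rw [hm, low5 d d le_rfl] at h
    have a1 := cast_c4 (d+0+5)
    have a2 := cast_c4 (0+4)
    have a3 := cast_c4 (d+4)
    have a4 := cast_c3 (d+0+4)
    have a5 := cast_c3 (0+3)
    push_cast at a1 a2 a3 a4 a5 h ⊢
    simp only [add_zero]
    linarith
  | succ t ih =>
    intro ht
    have h : aa d 5 (((d:ℤ)+1+t)+1) = aa d 5 (((d:ℤ)+1+t)+1-1) + aa d 4 (((d:ℤ)+1+t)+1)
        - aa d 4 (((d:ℤ)+1+t)+1-↑d-1) := aa_rec d 4 _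
    rw [show ((d:ℤ)+1+t)+1-1 = (d:ℤ)+1+t by ring,
        show ((d:ℤ)+1+t)+1-↑d-1 = ((t:ℤ)+1) by ring] at h
    have hm := mid4 d (t+1) (by omega)
    push_cast at hm
    rw [show (d:ℤ)+1+((t:ℤ)+1) = ((d:ℤ)+1+t)+1 by ring] at hm
    have hl := low4 d (t+1) (by omega)
    push_cast at hl
    rw [hm, hl, ih (by omega)] at h
    have a1 := cast_c4 (d+(t+1)+5)
    have a2 := cast_c4 ((t+1)+4)
    have a3 := cast_c4 (d+t+5)
    have a4 := cast_c4 (t+4)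
    have a5 := cast_c3 (d+(t+1)+4)
    have a6 := cast_c3 ((t+1)+3)
    have a7 := cast_c3 (t+1+3)
    push_cast at a1 a2 a3 a4 a5 a6 a7 h ⊢
    rw [show (d:ℤ)+1+((t:ℤ)+1) = ((d:ℤ)+1+t)+1 by ring]
    linarith
lemma base6 (d : ℕ) (hd : 1 ≤ d) :
    aa d 6 (3*(d:ℤ)) - aa d 6 (3*(d:ℤ)-1) ≤ aa d 6 (2*(d:ℤ)-1) - aa d 6 (2*(d:ℤ)-2) := by
  have h1 : aa d 6 (3*(d:ℤ)) - aa d 6 (3*(d:ℤ)-1)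
      = aa d 5 (3*(d:ℤ)) - aa d 5 (3*(d:ℤ)-↑d-1) := aa_diff d 5 _
  rw [show 3*(d:ℤ)-↑d-1 = 2*(d:ℤ)-1 by ring] at h1
  have h2 : aa d 5 (((5:ℕ):ℤ)*↑d - 3*(d:ℤ)) = aa d 5 (3*(d:ℤ)) := aa_symm d 5 _
  rw [show ((5:ℕ):ℤ)*(d:ℤ) - 3*(d:ℤ) = 2*(d:ℤ) by push_cast; ring] at h2
  have h3 : aa d 6 (2*(d:ℤ)-1) - aa d 6 (2*(d:ℤ)-1-1)
      = aa d 5 (2*(d:ℤ)-1) - aa d 5 (2*(d:ℤ)-1-↑d-1) := aa_diff d 5 _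
  rw [show 2*(d:ℤ)-1-1 = 2*(d:ℤ)-2 by ring,
      show 2*(d:ℤ)-1-↑d-1 = (d:ℤ)-2 by ring] at h3
  -- value at 2d
  have v1 := mid5 d (d-1) (by omega)
  rw [show ((d-1:ℕ):ℤ) = (d:ℤ)-1 by omega] at v1
  rw [show (d:ℤ)+1+((d:ℤ)-1) = 2*(d:ℤ) by ring] at v1
  rw [show d+(d-1)+5 = 2*d+4 by omega, show (d-1)+4 = d+3 by omega] at v1
  rcases eq_or_lt_of_le hd with hd1 | hd2
  · -- d = 1
    have hd1' : d = 1 := hd1.symm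
    subst hd1'
    have v2 := low5 1 1 le_rfl
    have v3 : aa 1 5 ((1:ℤ)-2) = 0 := aa_neg 1 5 _ (by norm_num)
    have c1 : (2*1+4 : ℕ).choose 4 = 15 := rfl
    have c2 : (1+3 : ℕ).choose 4 = 1 := rfl
    have c3 : (1+4 : ℕ).choose 4 = 5 := rfl
    rw [c1, c2] at v1
    rw [c3] at v2
    norm_num at h1 h2 h3 v1 v2 v3 ⊢
    linarith
  · -- d ≥ 2
    have hd2' : 2 ≤ d := hd2
    have v2 := mid5 d (d-2) (by omega)
    rw [show ((d-2:ℕ):ℤ) = (d:ℤ)-2 by omega] at v2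
    rw [show (d:ℤ)+1+((d:ℤ)-2) = 2*(d:ℤ)-1 by ring] at v2
    rw [show d+(d-2)+5 = 2*d+3 by omega, show (d-2)+4 = d+2 by omega] at v2
    have v3 := low5 d (d-2) (by omega)
    rw [show ((d-2:ℕ):ℤ) = (d:ℤ)-2 by omega] at v3
    rw [show (d-2)+4 = d+2 by omega] at v3
    have a1 := cast_c4 (2*d+4)
    have a2 := cast_c4 (2*d+3)
    have a3 := cast_c4 (d+3)
    have a4 := cast_c4 (d+2)
    have hx : (2:ℤ) ≤ (d:ℤ) := by exact_mod_cast hd2'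
    have key : 0 ≤ ((d:ℤ)-1) * (15*(d:ℤ)^3+49*(d:ℤ)^2+58*(d:ℤ)+24) := by
      apply mul_nonneg (by linarith)
      nlinarith [sq_nonneg ((d:ℤ))]
    push_cast at a1 a2 a3 a4
    nlinarith [h1, h2, h3, v1, v2, v3, a1, a2, a3, a4, key]
lemma main_ineq (d : ℕ) (hd : 1 ≤ d) : ∀ n : ℕ, 3 ≤ n →
    aa d (2*n) ((n:ℤ)*d) - aa d (2*n) ((n:ℤ)*d-1)
      ≤ aa d (2*n) ((n:ℤ)*d-↑d-1) - aa d (2*n) ((n:ℤ)*d-↑d-2) := by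
  intro n hn
  induction n, hn using Nat.le_induction with
  | base =>
    have h := base6 d hd
    rw [show 2*3 = 6 from rfl]
    rw [show ((3:ℕ):ℤ)*(d:ℤ) = 3*(d:ℤ) by push_cast; ring,
        show (3:ℤ)*(d:ℤ)-↑d-1 = 2*(d:ℤ)-1 by ring,
        show (3:ℤ)*(d:ℤ)-↑d-2 = 2*(d:ℤ)-2 by ring]
    exact h
  | succ n hn ih =>
    rw [show 2*(n+1) = 2*n+1+1 by ring]
    push_cast
    rw [show ((n:ℤ)+1)*↑d-↑d-1 = (n:ℤ)*↑d-1 by ring,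
        show ((n:ℤ)+1)*↑d-↑d-2 = (n:ℤ)*↑d-2 by ring]
    -- step 1: reduce both sides to exponent 2n+1
    have h1 : aa d (2*n+1+1) (((n:ℤ)+1)*↑d) - aa d (2*n+1+1) (((n:ℤ)+1)*↑d - 1)
        = aa d (2*n+1) (((n:ℤ)+1)*↑d) - aa d (2*n+1) (((n:ℤ)+1)*↑d - ↑d - 1) :=
      aa_diff d (2*n+1) _
    rw [show ((n:ℤ)+1)*↑d-↑d-1 = (n:ℤ)*↑d-1 by ring] at h1
    have h2 : aa d (2*n+1) ((↑(2*n+1):ℤ)*↑d - ((n:ℤ)+1)*↑d) = aa d (2*n+1) (((n:ℤ)+1)*↑d) :=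
      aa_symm d (2*n+1) _
    rw [show ((↑(2*n+1):ℕ):ℤ)*(d:ℤ) - ((n:ℤ)+1)*↑d = (n:ℤ)*↑d by push_cast; ring] at h2
    have h3 : aa d (2*n+1+1) ((n:ℤ)*↑d-1) - aa d (2*n+1+1) ((n:ℤ)*↑d-1-1)
        = aa d (2*n+1) ((n:ℤ)*↑d-1) - aa d (2*n+1) ((n:ℤ)*↑d-1-↑d-1) :=
      aa_diff d (2*n+1) _
    rw [show (n:ℤ)*↑d-1-1 = (n:ℤ)*↑d-2 by ring,
        show (n:ℤ)*↑d-1-↑d-1 = (n:ℤ)*↑d-↑d-2 by ring] at h3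
    -- step 2: exponent 2n+1 to 2n
    have h4 : aa d (2*n+1) ((n:ℤ)*↑d) - aa d (2*n+1) ((n:ℤ)*↑d-1)
        = aa d (2*n) ((n:ℤ)*↑d) - aa d (2*n) ((n:ℤ)*↑d-↑d-1) := aa_diff d (2*n) _
    -- telescoping
    have h5 : aa d (2*n+1) ((n:ℤ)*↑d-1) - aa d (2*n+1) ((n:ℤ)*↑d-1-↑d-1)
        = ∑ t ∈ Finset.range (d+1),
            (aa d (2*n+1) ((n:ℤ)*↑d-1-↑t) - aa d (2*n+1) ((n:ℤ)*↑d-1-↑t-1)) :=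
      aa_telescope d (2*n+1) _
    rw [show (n:ℤ)*↑d-1-↑d-1 = (n:ℤ)*↑d-↑d-2 by ring] at h5
    have h6 : ∀ t ∈ Finset.range (d+1),
        aa d (2*n+1) ((n:ℤ)*↑d-1-↑t) - aa d (2*n+1) ((n:ℤ)*↑d-1-↑t-1)
          = aa d (2*n) ((n:ℤ)*↑d-1-↑t) - aa d (2*n) ((n:ℤ)*↑d-1-↑t-↑d-1) :=
      fun t _ => aa_diff d (2*n) _
    rw [Finset.sum_congr rfl h6] at h5
    -- each term of the sum is nonnegative
    have h7 : ∀ t ∈ Finset.range (d+1),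
        0 ≤ aa d (2*n) ((n:ℤ)*↑d-1-↑t) - aa d (2*n) ((n:ℤ)*↑d-1-↑t-↑d-1) := by
      intro t _
      have := aa_mono d (2*n) ((n:ℤ)*↑d-1-↑t-↑d-1) ((n:ℤ)*↑d-1-↑t)
        (by linarith [Int.natCast_nonneg d])
        (by push_cast; nlinarith [Int.natCast_nonneg t])
      linarith
    -- the sum dominates its first term
    have h8 : (aa d (2*n) ((n:ℤ)*↑d-1-↑(0:ℕ)) - aa d (2*n) ((n:ℤ)*↑d-1-↑(0:ℕ)-↑d-1))
        ≤ ∑ t ∈ Finset.range (d+1),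
            (aa d (2*n) ((n:ℤ)*↑d-1-↑t) - aa d (2*n) ((n:ℤ)*↑d-1-↑t-↑d-1)) :=
      Finset.single_le_sum h7 (Finset.mem_range.mpr (by omega))
    rw [show (n:ℤ)*↑d-1-↑(0:ℕ)-↑d-1 = (n:ℤ)*↑d-↑d-2 by push_cast; ring,
        show (n:ℤ)*↑d-1-↑(0:ℕ) = (n:ℤ)*↑d-1 by push_cast; ring] at h8
    -- induction hypothesis
    -- ih : aa d (2*n) (↑n*↑d) - aa d (2*n) (↑n*↑d-1) ≤ aa d (2*n) (↑n*↑d-↑d-1) - aa d (2*n) (↑n*↑d-↑d-2)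
    linarith
/-- Coefficients of `(1 + z + ⋯ + z^d)^(2n)`:
`a_{nd} - a_{nd-1} ≤ a_{nd-d-1} - a_{nd-d-2}`. -/
theorem stmt_0 (n d : ℕ) (hn : 3 ≤ n) (hd : 1 ≤ d)
    (P : Polynomial ℤ)
    (hP : P = (∑ i ∈ Finset.range (d + 1), (Polynomial.X : Polynomial ℤ) ^ i) ^ (2 * n)) :
    P.coeff (n * d) - P.coeff (n * d - 1) ≤
      P.coeff (n * d - d - 1) - P.coeff (n * d - d - 2) := by
  subst hP
  have h3d : 3 * d ≤ n * d := Nat.mul_le_mul_right d hn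
  rw [aa_coeff, aa_coeff, aa_coeff, aa_coeff]
  have key := main_ineq d hd n hn
  obtain ⟨c, hc⟩ := Nat.exists_eq_add_of_le h3d
  have ecast : (n:ℤ)*(d:ℤ) = ((3*d + c : ℕ) : ℤ) := by rw [← hc]; push_cast; ring
  rw [ecast] at key
  rw [hc]
  rw [show ((3*d+c-1 : ℕ):ℤ) = ((3*d+c : ℕ):ℤ) - 1 by omega,
      show ((3*d+c-d-1 : ℕ):ℤ) = ((3*d+c : ℕ):ℤ) - ↑d - 1 by omega,
      show ((3*d+c-d-2 : ℕ):ℤ) = ((3*d+c : ℕ):ℤ) - ↑d - 2 by omega]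
  exact key
end

section
/- Let d ≥ 4 and write the alternating Hilbert-function difference D(j,d) = binom(j+5,5) - 8·binom(j+5-d,5) + 28·binom(j+5-2d,5) - 56·binom(j+5-3d,5), evaluated at j = floor(17(d-1)/5). Then D(j,d) ≤ 0. -/
/-- `binom(a,5)` with the convention that it vanishes for `a < 5`. -/
def binom5 (a : ℤ) : ℤ := (a.toNat.choose 5 : ℤ)

lemma choose5_cast (n : ℕ) :
    120 * ((n.choose 5 : ℕ) : ℤ) = n*(n-1)*(n-2)*(n-3)*(n-4) := by
  rcases Nat.lt_or_ge n 5 with h | h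
  · interval_cases n <;> simp <;> norm_num [Nat.choose]
  · obtain ⟨m, rfl⟩ : ∃ m, n = m + 5 := ⟨n - 5, by omega⟩
    have : (m + 5).descFactorial 5 = (m+5)*(m+4)*(m+3)*(m+2)*(m+1) := by
      simp [Nat.descFactorial]; ring
    have h2 := Nat.descFactorial_eq_factorial_mul_choose (m+5) 5
    rw [this] at h2
    have h3 : ((m+5)*(m+4)*(m+3)*(m+2)*(m+1) : ℤ) = 120 * ((m+5).choose 5 : ℤ) := by
      exact_mod_cast congrArg (Nat.cast : ℕ → ℤ) h2
    push_cast
    push_cast at h3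
    linarith [h3]

lemma binom5_eq (a : ℤ) (h : 0 ≤ a) :
    120 * binom5 a = a*(a-1)*(a-2)*(a-3)*(a-4) := by
  unfold binom5
  have := choose5_cast a.toNat
  rwa [Int.toNat_of_nonneg h] at this

theorem stmt_2 (d j : ℤ) (hd : 4 ≤ d) (hj : j = (17 * (d - 1)) / 5) :
    binom5 (j + 5) - 8 * binom5 (j + 5 - d) + 28 * binom5 (j + 5 - 2 * d)
      - 56 * binom5 (j + 5 - 3 * d) ≤ 0 := by
  obtain ⟨q, r, hr0, hr5, hd1⟩ : ∃ q r, 0 ≤ r ∧ r < 5 ∧ d = 5*q + r + 1 :=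
    ⟨(d-1)/5, (d-1)%5, Int.emod_nonneg _ (by norm_num),
      Int.emod_lt_of_pos _ (by norm_num), by omega⟩
  subst hd1
  have e1 := binom5_eq (j + 5) (by omega)
  have e2 := binom5_eq (j + 5 - (5*q+r+1)) (by omega)
  have e3 := binom5_eq (j + 5 - 2*(5*q+r+1)) (by omega)
  have e4 := binom5_eq (j + 5 - 3*(5*q+r+1)) (by omega)
  interval_cases r
  · -- r = 0, j = 17q, q ≥ 1
    have hq : 1 ≤ q := by omega
    have hjv : j = 17*q := by omega
    subst hjv
    have ht : 0 ≤ q - 1 := by omega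
    nlinarith [e1, e2, e3, e4, pow_nonneg ht 2, pow_nonneg ht 3, pow_nonneg ht 4, pow_nonneg ht 5]
  · have hq : 1 ≤ q := by omega
    have hjv : j = 17*q + 3 := by omega
    subst hjv
    have ht : 0 ≤ q - 1 := by omega
    nlinarith [e1, e2, e3, e4, pow_nonneg ht 2, pow_nonneg ht 3, pow_nonneg ht 4, pow_nonneg ht 5]
  · have hq : 1 ≤ q := by omega
    have hjv : j = 17*q + 6 := by omega
    subst hjv
    have ht : 0 ≤ q - 1 := by omega
    nlinarith [e1, e2, e3, e4, pow_nonneg ht 2, pow_nonneg ht 3, pow_nonneg ht 4, pow_nonneg ht 5]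
  · have hq : 0 ≤ q := by omega
    have hjv : j = 17*q + 10 := by omega
    subst hjv
    nlinarith [e1, e2, e3, e4, pow_nonneg hq 2, pow_nonneg hq 3, pow_nonneg hq 4, pow_nonneg hq 5]
  · have hq : 0 ≤ q := by omega
    have hjv : j = 17*q + 13 := by omega
    subst hjv
    nlinarith [e1, e2, e3, e4, pow_nonneg hq 2, pow_nonneg hq 3, pow_nonneg hq 4, pow_nonneg hq 5]
end

section
/- Let a_1 ≤ a_2 ≤ a_3 ≤ a_4 ≤ a_5 be integers with a_1+a_2+a_3+a_4 even, λ = (a_1+a_2+a_3+a_4)/2 - 2, a_5 < λ, and a_1 + a_4 ≥ a_2 + a_3. Then (a_5 - a_4 + 1) - [binom(λ+2,2) - Σ_{i=1}^4 binom(λ-a_i+2,2) + Σ_{1≤i<j≤3} binom(λ-a_i-a_j+2,2) - binom(λ-a_5+2,2)] = binom(λ+1-a_5, 2), and this binomial coefficient is at least 1. -/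
/-- `binom(a,2)` with the convention that it vanishes for `a < 2`. -/
def binom2 (a : ℤ) : ℤ := (a.toNat.choose 2 : ℤ)

lemma two_mul_choose_two (n : ℕ) : 2 * n.choose 2 = n * (n - 1) := by
  induction n with
  | zero => rfl
  | succ n ih =>
    rw [Nat.choose_succ_succ, Nat.choose_one_right, Nat.mul_add, ih, Nat.succ_sub_one]
    cases n with
    | zero => rfl
    | succ m => rw [Nat.succ_sub_one]; ring

lemma binom2_eq (x : ℤ) (hx : 0 ≤ x) : 2 * binom2 x = x * (x - 1) := by
  unfold binom2
  rcases Nat.eq_zero_or_pos x.toNat with h | h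
  · have hx0 : x = 0 := by omega
    simp [hx0]
  · have : ((x.toNat * (x.toNat - 1) : ℕ) : ℤ) = x * (x - 1) := by
      have h1 : ((x.toNat - 1 : ℕ) : ℤ) = x - 1 := by
        rw [Int.natCast_sub h]; simp [Int.toNat_of_nonneg hx]
      push_cast [h1]
      rw [Int.toNat_of_nonneg hx]
    rw [← this, ← two_mul_choose_two]
    push_cast
    ring

theorem stmt_7 (a₁ a₂ a₃ a₄ a₅ lam : ℤ)
    (h12 : a₁ ≤ a₂) (h23 : a₂ ≤ a₃) (h34 : a₃ ≤ a₄) (h45 : a₄ ≤ a₅)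
    (heven : Even (a₁ + a₂ + a₃ + a₄))
    (hlam : 2 * lam = a₁ + a₂ + a₃ + a₄ - 4)
    (h5 : a₅ < lam) (hsum : a₂ + a₃ ≤ a₁ + a₄) :
    (a₅ - a₄ + 1) -
      (binom2 (lam + 2)
        - (binom2 (lam - a₁ + 2) + binom2 (lam - a₂ + 2) + binom2 (lam - a₃ + 2)
            + binom2 (lam - a₄ + 2))
        + (binom2 (lam - a₁ - a₂ + 2) + binom2 (lam - a₁ - a₃ + 2) + binom2 (lam - a₂ - a₃ + 2))
        - binom2 (lam - a₅ + 2)) = binom2 (lam + 1 - a₅) ∧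
    1 ≤ binom2 (lam + 1 - a₅) := by
  have ha1 : a₁ = 2 * lam - a₂ - a₃ - a₄ + 4 := by linarith
  subst ha1
  have e0 := binom2_eq (lam + 2) (by linarith)
  have e1 := binom2_eq (lam - (2 * lam - a₂ - a₃ - a₄ + 4) + 2) (by linarith)
  have e2 := binom2_eq (lam - a₂ + 2) (by linarith)
  have e3 := binom2_eq (lam - a₃ + 2) (by linarith)
  have e4 := binom2_eq (lam - a₄ + 2) (by linarith)
  have f1 := binom2_eq (lam - (2 * lam - a₂ - a₃ - a₄ + 4) - a₂ + 2) (by linarith)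
  have f2 := binom2_eq (lam - (2 * lam - a₂ - a₃ - a₄ + 4) - a₃ + 2) (by linarith)
  have f3 := binom2_eq (lam - a₂ - a₃ + 2) (by linarith)
  have e5 := binom2_eq (lam - a₅ + 2) (by linarith)
  have eD := binom2_eq (lam + 1 - a₅) (by linarith)
  constructor
  · have h2 : 2 * ((a₅ - a₄ + 1) -
      (binom2 (lam + 2)
        - (binom2 (lam - (2 * lam - a₂ - a₃ - a₄ + 4) + 2) + binom2 (lam - a₂ + 2)
            + binom2 (lam - a₃ + 2) + binom2 (lam - a₄ + 2))
        + (binom2 (lam - (2 * lam - a₂ - a₃ - a₄ + 4) - a₂ + 2)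
            + binom2 (lam - (2 * lam - a₂ - a₃ - a₄ + 4) - a₃ + 2)
            + binom2 (lam - a₂ - a₃ + 2))
        - binom2 (lam - a₅ + 2))) = 2 * binom2 (lam + 1 - a₅) := by
      linear_combination -e0 + e1 + e2 + e3 + e4 - f1 - f2 - f3 + e5 - eD
    linarith
  · nlinarith [eD]
end

section
/- Let a_1 ≤ a_2 ≤ a_3 ≤ a_4 ≤ a_5 be integers with a_1+a_2+a_3+a_4 even, λ = (a_1+a_2+a_3+a_4)/2 - 2, a_5 < λ, a_1 + a_4 < a_2 + a_3, and 2a_5 + a_1 - a_2 - a_3 - a_4 ≥ 0. Then (a_5 - (-a_1+a_2+a_3+a_4)/2 + 1) - [binom(λ+2,2) - Σ_{i=1}^4 binom(λ-a_i+2,2) + Σ_{i=2}^4 binom(λ-a_1-a_i+2,2) - binom(λ-a_5+2,2)] = binom(λ+1-a_5, 2) ≥ 1. -/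
lemma two_binom2 (a : ℤ) (h : 0 ≤ a) : 2 * binom2 a = a * (a - 1) := by
  unfold binom2
  lift a to ℕ using h with n
  simp only [Int.toNat_natCast]
  have key : 2 * n.choose 2 = n * (n - 1) := by
    rw [Nat.choose_two_right, Nat.mul_div_cancel' (Nat.even_mul_pred_self n).two_dvd]
  cases n with
  | zero => simp
  | succ m =>
    have := congrArg (Nat.cast : ℕ → ℤ) key
    push_cast [Nat.succ_sub_one] at this ⊢
    linear_combination this

theorem stmt_8 (a₁ a₂ a₃ a₄ a₅ lam : ℤ)
    (h12 : a₁ ≤ a₂) (h23 : a₂ ≤ a₃) (h34 : a₃ ≤ a₄) (h45 : a₄ ≤ a₅)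
    (heven : Even (a₁ + a₂ + a₃ + a₄))
    (hlam : 2 * lam = a₁ + a₂ + a₃ + a₄ - 4)
    (h5 : a₅ < lam) (hsum : a₁ + a₄ < a₂ + a₃)
    (hcond : 0 ≤ 2 * a₅ + a₁ - a₂ - a₃ - a₄) :
    (a₅ - (-a₁ + a₂ + a₃ + a₄) / 2 + 1) -
      (binom2 (lam + 2)
        - (binom2 (lam - a₁ + 2) + binom2 (lam - a₂ + 2) + binom2 (lam - a₃ + 2)
            + binom2 (lam - a₄ + 2))
        + (binom2 (lam - a₁ - a₂ + 2) + binom2 (lam - a₁ - a₃ + 2) + binom2 (lam - a₁ - a₄ + 2))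
        - binom2 (lam - a₅ + 2)) = binom2 (lam + 1 - a₅) ∧
    1 ≤ binom2 (lam + 1 - a₅) := by
  have ha1 : 3 ≤ a₁ := by linarith
  have hdiv : (-a₁ + a₂ + a₃ + a₄) = 2 * (lam + 2 - a₁) := by linarith
  rw [hdiv, Int.mul_ediv_cancel_left _ (by norm_num)]
  have e1 := two_binom2 (lam + 2) (by linarith)
  have e2 := two_binom2 (lam - a₁ + 2) (by linarith)
  have e3 := two_binom2 (lam - a₂ + 2) (by linarith)
  have e4 := two_binom2 (lam - a₃ + 2) (by linarith)
  have e5 := two_binom2 (lam - a₄ + 2) (by linarith)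
  have e6 := two_binom2 (lam - a₁ - a₂ + 2) (by linarith)
  have e7 := two_binom2 (lam - a₁ - a₃ + 2) (by linarith)
  have e8 := two_binom2 (lam - a₁ - a₄ + 2) (by linarith)
  have e9 := two_binom2 (lam - a₅ + 2) (by linarith)
  have e10 := two_binom2 (lam + 1 - a₅) (by linarith)
  constructor
  · have h2 : 2 * ((a₅ - (lam + 2 - a₁) + 1) -
      (binom2 (lam + 2)
        - (binom2 (lam - a₁ + 2) + binom2 (lam - a₂ + 2) + binom2 (lam - a₃ + 2)
            + binom2 (lam - a₄ + 2))
        + (binom2 (lam - a₁ - a₂ + 2) + binom2 (lam - a₁ - a₃ + 2) + binom2 (lam - a₁ - a₄ + 2))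
        - binom2 (lam - a₅ + 2))) = 2 * binom2 (lam + 1 - a₅) := by
      have ha4 : a₄ = 2 * lam + 4 - a₁ - a₂ - a₃ := by linarith
      subst ha4
      linear_combination -e1 + e2 + e3 + e4 + e5 - e6 - e7 - e8 + e9 - e10
    linarith
  · have h2 : 2 ≤ lam + 1 - a₅ := by linarith
    nlinarith [e10]
end
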